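/- Speed of propagation of information: assume G has n vertices and maximum degree Δ > 1, and let P be a local Markov chain on S. Let f : S → ℝ be supported on B, let Λ ⊃ B, and set r = dist(B, Λ^c). If x, x' ∈ S satisfy x_i = x'_i for all i ∈ Λ, then for every integer t ≥ 0, |P^t f(x) - P^t f(x')| ≤ ‖f‖_∞ · 8|B| · e^{v·t/n - r}, where v = e²(Δ - 1). -/

import Mathlib

namespace GibbsLP

variable {V : Type*} [Fintype V] [DecidableEq V]

/-- Spin configurations on the vertex set `V`; the two spin values `-1, +1` are
encoded by the two-element type `Bool`. -/
abbrev Config (V : Type*) := V → Bool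

/-- The configuration `x` with the spin at site `i` flipped (denoted `xⁱ` in the paper). -/
def flip (x : Config V) (i : V) : Config V := Function.update x i (!x i)

/-- Discrete gradient `∇ᵢ f (x) = f(xⁱ) - f(x)`. -/
def grad (f : Config V → ℝ) (i : V) (x : Config V) : ℝ := f (flip x i) - f x

/-- `f` depends only on the spins in `Λ`, i.e. `supp f ⊆ Λ`. -/
def SupportedOn (f : Config V → ℝ) (Λ : Set V) : Prop :=
  ∀ i ∉ Λ, ∀ x, f (flip x i) = f x

/-- The support `supp f = {i : ∇ᵢ f ≠ 0}` of an observable. -/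
def sptSet (f : Config V → ℝ) : Set V := {i | ∃ x, f (flip x i) ≠ f x}

/-- Sup norm of an observable. -/
noncomputable def supNorm {α : Type*} (f : α → ℝ) : ℝ := ⨆ x, |f x|

/-- The Hamiltonian `H(x) = β ∑_{{i,j} ∈ E} h_{ij}(x_i, x_j)`; each unordered edge is
counted once (hence the factor `1/2` for the ordered double sum). -/
noncomputable def ham (G : SimpleGraph V) [DecidableRel G.Adj] (β : ℝ)
    (h : V → V → Bool → Bool → ℝ) (x : Config V) : ℝ :=
  β * ((1 : ℝ) / 2 * ∑ i : V, ∑ j : V, if G.Adj i j then h i j (x i) (x j) else 0)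

/-- The Gibbs distribution `μ(x) = e^{-H(x)} / Z`. -/
noncomputable def gibbs (H : Config V → ℝ) (x : Config V) : ℝ :=
  Real.exp (-H x) / ∑ y : Config V, Real.exp (-H y)

/-- `ν` is a probability distribution. -/
def IsDist {α : Type*} [Fintype α] (ν : α → ℝ) : Prop :=
  (∀ a, 0 ≤ ν a) ∧ ∑ a, ν a = 1

/-- Spin configurations on a subset `A ⊆ V`. -/
abbrev SubConfig {V : Type*} (A : Finset V) := {i : V // i ∈ A} → Bool

/-- Restriction of a configuration to `A`. -/
def restrict (A : Finset V) (x : Config V) : SubConfig A := fun i => x i.1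

/-- Extension of a configuration on `A` to all of `V` (by an arbitrary fixed value outside). -/
def extendC (A : Finset V) (y : SubConfig A) : Config V :=
  fun i => if h : i ∈ A then y ⟨i, h⟩ else true

/-- Flip the spin of `y : SubConfig A` at site `i` (identity if `i ∉ A`). -/
def flipAt (A : Finset V) (y : SubConfig A) (i : V) : SubConfig A :=
  fun j => if j.1 = i then !(y j) else y j

/-- External boundary `∂ᵉˣ Λ = {j ∉ Λ : ∃ i ∈ Λ, {i,j} ∈ E}`. -/
def extBoundary (G : SimpleGraph V) [DecidableRel G.Adj] (Λ : Finset V) : Finset V :=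
  Finset.univ.filter fun j => j ∉ Λ ∧ ∃ i ∈ Λ, G.Adj i j

/-- External boundary of a set of vertices (set version). -/
def extBoundarySet (G : SimpleGraph V) (A : Set V) : Set V :=
  {j | j ∉ A ∧ ∃ i ∈ A, G.Adj i j}

/-- `Λ̄ = Λ ∪ ∂ᵉˣ Λ`. -/
def closure (G : SimpleGraph V) [DecidableRel G.Adj] (Λ : Finset V) : Finset V :=
  Λ ∪ extBoundary G Λ

/-- `∇ᵢ H` evaluated on a configuration on `A` (well defined for `i ∈ Λ`, `A = Λ̄`, since
then `∇ᵢ H` only depends on the spins in `Λ̄`). -/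
noncomputable def gradH (A : Finset V) (H : Config V → ℝ) (i : V) (y : SubConfig A) : ℝ :=
  H (flip (extendC A y) i) - H (extendC A y)

/-- Expectation `ν(f)` of an observable `f` supported in `A` under a distribution `ν` on
`Σ^A`. -/
noncomputable def lexp {A : Finset V} (ν : SubConfig A → ℝ) (f : Config V → ℝ) : ℝ :=
  ∑ y : SubConfig A, ν y * f (extendC A y)

/-- The DLR linear program: distributions on `Σ^{Λ̄}` satisfying the local spin-flip
equations `ν(y) = ν(yⁱ) e^{∇ᵢH(y)}` for all `y` and `i ∈ Λ`. -/
def LPdlr (G : SimpleGraph V) [DecidableRel G.Adj] (H : Config V → ℝ) (Λ : Finset V) :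
    Set (SubConfig (closure G Λ) → ℝ) :=
  {ν | IsDist ν ∧ ∀ y, ∀ i ∈ Λ,
      ν y = ν (flipAt (closure G Λ) y i) * Real.exp (gradH (closure G Λ) H i y)}

/-- Values `ν(f)` over feasible points `ν` of the DLR linear program. -/
def dlrVals (G : SimpleGraph V) [DecidableRel G.Adj] (H : Config V → ℝ) (Λ : Finset V)
    (f : Config V → ℝ) : Set ℝ :=
  {t | ∃ ν ∈ LPdlr G H Λ, t = lexp ν f}

/-- Marginal of a distribution `μ` on `Σ^V` on the sites in `A`. -/
noncomputable def marg (A : Finset V) (μ : Config V → ℝ) : SubConfig A → ℝ :=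
  fun y => ∑ x : Config V, if restrict A x = y then μ x else 0

/-- The Hamiltonian truncated to `Λ` with boundary condition `η` on `∂ᵉˣ Λ`. -/
noncomputable def hamLoc (G : SimpleGraph V) [DecidableRel G.Adj] (β : ℝ)
    (h : V → V → Bool → Bool → ℝ) (Λ : Finset V)
    (η : SubConfig (extBoundary G Λ)) (x : SubConfig Λ) : ℝ :=
  β * ((1 : ℝ) / 2 * (∑ i ∈ Λ.attach, ∑ j ∈ Λ.attach,
        if G.Adj i.1 j.1 then h i.1 j.1 (x i) (x j) else 0)
    + ∑ i ∈ Λ.attach, ∑ j ∈ (extBoundary G Λ).attach,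
        if G.Adj i.1 j.1 then h i.1 j.1 (x i) (η j) else 0)

/-- The local Gibbs state `μ_Λ^η` on `Λ` with boundary condition `η`. -/
noncomputable def gibbsLoc (G : SimpleGraph V) [DecidableRel G.Adj] (β : ℝ)
    (h : V → V → Bool → Bool → ℝ) (Λ : Finset V)
    (η : SubConfig (extBoundary G Λ)) (x : SubConfig Λ) : ℝ :=
  Real.exp (-(hamLoc G β h Λ η x)) /
    ∑ x' : SubConfig Λ, Real.exp (-(hamLoc G β h Λ η x'))

/-- Expectation `μ_Λ^η(f)` of an observable supported in `Λ` under the local Gibbs state. -/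
noncomputable def gibbsLocExp (G : SimpleGraph V) [DecidableRel G.Adj] (β : ℝ)
    (h : V → V → Bool → Bool → ℝ) (Λ : Finset V)
    (η : SubConfig (extBoundary G Λ)) (f : Config V → ℝ) : ℝ :=
  ∑ x : SubConfig Λ, gibbsLoc G β h Λ η x * f (extendC Λ x)

/-- Combine `x ∈ Σ^Λ` and `η ∈ Σ^{∂ᵉˣΛ}` into a configuration `(x, η) ∈ Σ^{Λ̄}`. -/
def glue (G : SimpleGraph V) [DecidableRel G.Adj] (Λ : Finset V)
    (x : SubConfig Λ) (η : SubConfig (extBoundary G Λ)) : SubConfig (closure G Λ) :=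
  fun i => if h : i.1 ∈ Λ then x ⟨i.1, h⟩
    else η ⟨i.1, by
      have hi := i.2
      simp only [closure, Finset.mem_union] at hi
      tauto⟩

/-- A local (single-site, finite-range, bounded-rate) Markov chain on `Σ^V`. -/
structure IsLocalMC (G : SimpleGraph V) (P : Config V → Config V → ℝ) : Prop where
  nonneg : ∀ x x', 0 ≤ P x x'
  rowSum : ∀ x, ∑ x', P x x' = 1
  /-- `P_{x,x'} = 0` if `x'` differs from `x` on more than one site. -/
  singleSite : ∀ x x', x' ≠ x → (∀ i, x' ≠ flip x i) → P x x' = 0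
  /-- `P_{x,xⁱ}` only depends on the spins in the closed neighborhood of `i`. -/
  locality : ∀ i : V, ∀ x x' : Config V, x i = x' i →
      (∀ j, G.Adj i j → x j = x' j) → P x (flip x i) = P x' (flip x' i)
  /-- `P_{x,x'} ≤ 1/n` off the diagonal. -/
  bounded : ∀ x x', x ≠ x' → P x x' ≤ 1 / (Fintype.card V : ℝ)

/-- The Markov-chain linear program: distributions on `Σ^{Λ̄}` satisfying the stationarity
equations `ν(Pg) = ν(g)` for all `g` supported on `Λ`. -/
def LPmc (G : SimpleGraph V) [DecidableRel G.Adj] (P : Config V → Config V → ℝ)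
    (Λ : Finset V) : Set (SubConfig (closure G Λ) → ℝ) :=
  {ν | IsDist ν ∧ ∀ g : Config V → ℝ, SupportedOn g ↑Λ →
      lexp ν ((Matrix.of P).mulVec g) = lexp ν g}

/-- Values `ν(f)` over feasible points `ν` of the Markov-chain linear program. -/
def mcVals (G : SimpleGraph V) [DecidableRel G.Adj] (P : Config V → Config V → ℝ)
    (Λ : Finset V) (f : Config V → ℝ) : Set ℝ :=
  {t | ∃ ν ∈ LPmc G P Λ, t = lexp ν f}

/-- The heat-bath dynamics: site `i` is flipped with probability
`c(i,x) = e^{-∇ᵢH(x)} / (1 + e^{-∇ᵢH(x)})`, each site being selected with probability `1/n`. -/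
noncomputable def heatBath (H : Config V → ℝ) (x x' : Config V) : ℝ :=
  if x' = x then
    1 - (∑ i : V, Real.exp (-(grad H i x)) / (1 + Real.exp (-(grad H i x)))) /
      (Fintype.card V : ℝ)
  else
    ∑ i : V, if x' = flip x i then
      (Real.exp (-(grad H i x)) / (1 + Real.exp (-(grad H i x)))) / (Fintype.card V : ℝ)
    else 0

/-- Marginal on `Σ^A` of a distribution on `Σ^B`, for `A ⊆ B`. -/
noncomputable def margTo {A B : Finset V} (hAB : A ⊆ B) (ν : SubConfig B → ℝ) :
    SubConfig A → ℝ :=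
  fun z => ∑ y : SubConfig B,
    if (fun i : {i : V // i ∈ A} => y ⟨i.1, hAB i.2⟩) = z then ν y else 0

theorem closure_mono (G : SimpleGraph V) [DecidableRel G.Adj] {Λ Λ' : Finset V}
    (hs : Λ ⊆ Λ') : closure G Λ ⊆ closure G Λ' := by
  intro j hj
  simp only [closure, Finset.mem_union, extBoundary, Finset.mem_filter, Finset.mem_univ,
    true_and] at hj ⊢
  by_cases hjΛ' : j ∈ Λ'
  · exact Or.inl hjΛ'
  · rcases hj with hj | ⟨hjn, i, hiΛ, hadj⟩
    · exact absurd (hs hj) hjΛ'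
    · exact Or.inr ⟨hjΛ', i, hs hiΛ, hadj⟩



/-! ### Auxiliary lemmas for the speed of propagation theorem -/

section SpeedAux

variable {V : Type*} [Fintype V] [DecidableEq V]

lemma flip_apply_self (x : Config V) (i : V) : flip x i i = !x i := by
  simp [flip]

lemma flip_apply_ne (x : Config V) {i j : V} (h : j ≠ i) : flip x i j = x j := by
  simp [flip, Function.update_of_ne h]

lemma flip_ne (x : Config V) (i : V) : flip x i ≠ x := by
  intro h
  have h1 : flip x i i = x i := congrFun h i
  rw [flip_apply_self] at h1
  exact Bool.not_ne_self (x i) h1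

lemma flip_flip (x : Config V) (i : V) : flip (flip x i) i = x := by
  funext j
  rcases eq_or_ne j i with rfl | h
  · rw [flip_apply_self, flip_apply_self, Bool.not_not]
  · rw [flip_apply_ne _ h, flip_apply_ne _ h]

lemma flip_comm (x : Config V) {i j : V} (h : i ≠ j) :
    flip (flip x j) i = flip (flip x i) j := by
  funext k
  by_cases hki : k = i
  · subst hki
    rw [flip_apply_self, flip_apply_ne _ h, flip_apply_ne _ h, flip_apply_self]
  · by_cases hkj : k = j
    · subst hkj
      rw [flip_apply_ne _ hki, flip_apply_self, flip_apply_self, flip_apply_ne _ hki]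
    · rw [flip_apply_ne _ hki, flip_apply_ne _ hkj, flip_apply_ne _ hkj, flip_apply_ne _ hki]

lemma flip_injective (x : Config V) : Function.Injective (fun i => flip x i) := by
  intro i j h
  by_contra hij
  have h1 : flip x i i = flip x j i := congrFun h i
  rw [flip_apply_self, flip_apply_ne x hij] at h1
  exact (Bool.not_ne_self (x i)) h1

lemma abs_le_supNorm (f : Config V → ℝ) (x : Config V) : |f x| ≤ supNorm f :=
  le_ciSup (f := fun y => |f y|) (Set.Finite.bddAbove (Set.finite_range _)) x

lemma supNorm_nonneg' (f : Config V → ℝ) : 0 ≤ supNorm f :=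
  le_trans (abs_nonneg _) (abs_le_supNorm f (fun _ => true))

/-- Expansion of a local Markov chain applied to an observable. -/
lemma mulVec_expand {G : SimpleGraph V} {P : Config V → Config V → ℝ}
    (hP : IsLocalMC G P) (g : Config V → ℝ) (y : Config V) :
    (Matrix.of P).mulVec g y = g y + ∑ i : V, P y (flip y i) * grad g i y := by
  have hsum : ∀ u : Config V → ℝ,
      ∑ x' ∈ Finset.univ.erase y, P y x' * u x' = ∑ i : V, P y (flip y i) * u (flip y i) := by
    intro u
    rw [← Finset.sum_image (f := fun x' => P y x' * u x')
      (g := fun i => flip y i) (fun i _ j _ h => flip_injective y h)]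
    apply (Finset.sum_subset ?_ ?_).symm
    · intro x' hx'
      simp only [Finset.mem_image, Finset.mem_univ, true_and] at hx'
      obtain ⟨i, rfl⟩ := hx'
      exact Finset.mem_erase.2 ⟨flip_ne y i, Finset.mem_univ _⟩
    · intro x' hx' hx''
      have h1 : x' ≠ y := (Finset.mem_erase.1 hx').1
      have h2 : ∀ i, x' ≠ flip y i := by
        intro i hi
        exact hx'' (Finset.mem_image.2 ⟨i, Finset.mem_univ _, hi.symm⟩)
      rw [hP.singleSite y x' h1 h2, zero_mul]
  have hrow : P y y = 1 - ∑ i : V, P y (flip y i) := by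
    have h0 := hP.rowSum y
    rw [← Finset.add_sum_erase _ _ (Finset.mem_univ y)] at h0
    have h2 := hsum (fun _ => 1)
    simp only [mul_one] at h2
    rw [h2] at h0
    linarith
  have hmv : (Matrix.of P).mulVec g y = ∑ x' : Config V, P y x' * g x' := by
    simp [Matrix.mulVec, dotProduct, Matrix.of_apply]
  have hd : ∑ i : V, P y (flip y i) * grad g i y
      = (∑ i : V, P y (flip y i) * g (flip y i)) - (∑ i : V, P y (flip y i)) * g y := by
    rw [Finset.sum_mul, ← Finset.sum_sub_distrib]
    apply Finset.sum_congr rfl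
    intro i _
    simp only [grad]
    ring
  rw [hmv, ← Finset.add_sum_erase _ _ (Finset.mem_univ y), hsum g, hrow, hd]
  ring

/-- The key one-step estimate: applying a local Markov chain to an observable
increases gradient bounds only through the closed neighborhood, with small weights. -/
lemma onestep [Nonempty V] {G : SimpleGraph V} [DecidableRel G.Adj] {P : Config V → Config V → ℝ}
    (hP : IsLocalMC G P) (g : Config V → ℝ) (bnd : V → ℝ)
    (hb : ∀ j x, |grad g j x| ≤ bnd j) (j : V) (x : Config V) :
    |grad ((Matrix.of P).mulVec g) j x| ≤
      (1 + 1 / (Fintype.card V : ℝ)) * bnd j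
        + (1 / (Fintype.card V : ℝ)) * ∑ i ∈ G.neighborFinset j, bnd i := by
  set n : ℝ := (Fintype.card V : ℝ) with hn
  have hn1 : (1 : ℝ) ≤ n := by
    have hcard : 1 ≤ Fintype.card V := Fintype.card_pos
    rw [hn]; exact_mod_cast hcard
  have hbnn : ∀ i, 0 ≤ bnd i := fun i => le_trans (abs_nonneg _) (hb i (fun _ => true))
  -- notation
  set c : V → ℝ := fun i => P x (flip x i) with hc
  set c' : V → ℝ := fun i => P (flip x j) (flip (flip x j) i) with hc'
  have hcmem : ∀ (y : Config V) (i : V), 0 ≤ P y (flip y i) ∧ P y (flip y i) ≤ 1 / n := by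
    intro y i
    exact ⟨hP.nonneg y _, hP.bounded y (flip y i) (flip_ne y i).symm⟩
  -- the expansion of the gradient
  have hgrad : grad ((Matrix.of P).mulVec g) j x
      = grad g j x + ∑ i : V, (c' i * grad g i (flip x j) - c i * grad g i x) := by
    simp only [grad, mulVec_expand hP g]
    rw [Finset.sum_sub_distrib]
    ring
  -- identity rearrangement
  have hDj : grad g j (flip x j) = - grad g j x := by
    simp only [grad, flip_flip]
    ring
  have hkey : grad ((Matrix.of P).mulVec g) j x
      = (1 - (∑ i : V, c i) - c' j) * grad g j x
        + (∑ i ∈ Finset.univ.erase j, c i * grad g j (flip x i))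
        + (∑ i ∈ Finset.univ.erase j, (c' i - c i) * grad g i (flip x j)) := by
    rw [hgrad]
    rw [← Finset.add_sum_erase _ (fun i => c' i * grad g i (flip x j) - c i * grad g i x)
      (Finset.mem_univ j)]
    rw [← Finset.add_sum_erase _ c (Finset.mem_univ j)]
    have hterm : ∀ i ∈ Finset.univ.erase j,
        c' i * grad g i (flip x j) - c i * grad g i x
          = (c i * grad g j (flip x i) - c i * grad g j x)
            + (c' i - c i) * grad g i (flip x j) := by
      intro i hi
      have hij : i ≠ j := (Finset.mem_erase.1 hi).1
      have hid : grad g i (flip x j) - grad g i x = grad g j (flip x i) - grad g j x := by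
        simp only [grad, flip_comm x hij]
        ring
      linear_combination (c i) * hid
    rw [Finset.sum_congr rfl hterm, Finset.sum_add_distrib, Finset.sum_sub_distrib, hDj]
    rw [show ∑ i ∈ Finset.univ.erase j, c i * grad g j x
        = (∑ i ∈ Finset.univ.erase j, c i) * grad g j x from (Finset.sum_mul _ _ _).symm]
    ring
  -- bounds on the three pieces
  have hQ : 0 ≤ 1 - (∑ i : V, c i) := by
    have h1 : ∑ i : V, c i ≤ ∑ x' : Config V, P x x' := by
      rw [show (∑ i : V, c i) = ∑ x' ∈ Finset.univ.image (fun i => flip x i), P x x' from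
        (Finset.sum_image (fun i _ j _ h => flip_injective x h)).symm]
      exact Finset.sum_le_sum_of_subset_of_nonneg (Finset.subset_univ _)
        (fun y _ _ => hP.nonneg x y)
    rw [hP.rowSum x] at h1
    linarith
  have hA1 : |1 - (∑ i : V, c i) - c' j| + (∑ i ∈ Finset.univ.erase j, c i) ≤ 1 + 1 / n := by
    have hS : (∑ i ∈ Finset.univ.erase j, c i) = (∑ i : V, c i) - c j := by
      rw [← Finset.add_sum_erase _ c (Finset.mem_univ j)]; ring
    have hcj := hcmem x j
    have hcj' : 0 ≤ c' j ∧ c' j ≤ 1 / n := hcmem (flip x j) j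
    rcases abs_cases (1 - (∑ i : V, c i) - c' j) with ⟨heq, _⟩ | ⟨heq, _⟩ <;>
      rw [heq, hS] <;> linarith [hcj.1, hcj.2, hcj'.1, hcj'.2, hQ]
  have hthird : ∑ i ∈ Finset.univ.erase j, |(c' i - c i) * grad g i (flip x j)|
      ≤ (1 / n) * ∑ i ∈ G.neighborFinset j, bnd i := by
    have hsub : G.neighborFinset j ⊆ Finset.univ.erase j := by
      intro i hi
      rw [SimpleGraph.mem_neighborFinset] at hi
      exact Finset.mem_erase.2 ⟨(G.ne_of_adj hi).symm, Finset.mem_univ _⟩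
    have hvan : ∀ i ∈ Finset.univ.erase j, i ∉ G.neighborFinset j →
        |(c' i - c i) * grad g i (flip x j)| = 0 := by
      intro i hi hni
      rw [SimpleGraph.mem_neighborFinset] at hni
      have hij : i ≠ j := (Finset.mem_erase.1 hi).1
      have hloc : c i = c' i := by
        apply hP.locality i x (flip x j)
        · exact (flip_apply_ne x hij).symm
        · intro k hk
          have hkj : k ≠ j := by
            intro hkj; subst hkj
            exact hni (G.adj_symm hk)
          exact (flip_apply_ne x hkj).symm
      rw [hloc, sub_self, zero_mul, abs_zero]
    calc ∑ i ∈ Finset.univ.erase j, |(c' i - c i) * grad g i (flip x j)|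
        = ∑ i ∈ G.neighborFinset j, |(c' i - c i) * grad g i (flip x j)| :=
          (Finset.sum_subset hsub hvan).symm
      _ ≤ ∑ i ∈ G.neighborFinset j, (1 / n) * bnd i := by
          apply Finset.sum_le_sum
          intro i hi
          have h1 := hcmem x i
          have h2 := hcmem (flip x j) i
          have h3 : |c' i - c i| ≤ 1 / n :=
            abs_le.2 ⟨by linarith [h1.2, h2.1], by linarith [h1.1, h2.2]⟩
          rw [abs_mul]
          exact mul_le_mul h3 (hb i _) (abs_nonneg _) (by positivity)
      _ = (1 / n) * ∑ i ∈ G.neighborFinset j, bnd i := by rw [Finset.mul_sum]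
  -- assemble
  rw [hkey]
  have hcpos : ∀ i, 0 ≤ c i := fun i => (hcmem x i).1
  calc |(1 - (∑ i : V, c i) - c' j) * grad g j x
        + (∑ i ∈ Finset.univ.erase j, c i * grad g j (flip x i))
        + (∑ i ∈ Finset.univ.erase j, (c' i - c i) * grad g i (flip x j))|
      ≤ |(1 - (∑ i : V, c i) - c' j) * grad g j x|
        + |∑ i ∈ Finset.univ.erase j, c i * grad g j (flip x i)|
        + |∑ i ∈ Finset.univ.erase j, (c' i - c i) * grad g i (flip x j)| := by
        exact le_trans (abs_add_le _ _) (by gcongr; exact abs_add_le _ _)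
    _ ≤ |1 - (∑ i : V, c i) - c' j| * bnd j
        + (∑ i ∈ Finset.univ.erase j, c i) * bnd j
        + (1 / n) * ∑ i ∈ G.neighborFinset j, bnd i := by
        gcongr
        · rw [abs_mul]
          exact mul_le_mul_of_nonneg_left (hb j x) (abs_nonneg _)
        · apply le_trans (Finset.abs_sum_le_sum_abs _ _)
          rw [Finset.sum_mul]
          apply Finset.sum_le_sum
          intro i _
          rw [abs_mul, abs_of_nonneg (hcpos i)]
          exact mul_le_mul_of_nonneg_left (hb j _) (hcpos i)
        · exact le_trans (Finset.abs_sum_le_sum_abs _ _) hthird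
    _ ≤ (1 + 1 / n) * bnd j + (1 / n) * ∑ i ∈ G.neighborFinset j, bnd i := by
        have hbj := hbnn j
        nlinarith [hA1]

variable (G : SimpleGraph V) [DecidableRel G.Adj]

/-- The comparison process: `(1 + 1/n) Id + (1/n) Adj` applied `t` times to `1_B`. -/
noncomputable def phiB (B : Finset V) : ℕ → V → ℝ
  | 0 => fun j => if j ∈ B then 1 else 0
  | (t+1) => fun j => (1 + 1 / (Fintype.card V : ℝ)) * phiB B t j
      + (1 / (Fintype.card V : ℝ)) * ∑ i ∈ G.neighborFinset j, phiB B t i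

lemma phiB_nonneg (B : Finset V) : ∀ t j, 0 ≤ phiB G B t j := by
  intro t
  induction t with
  | zero => intro j; simp only [phiB]; positivity
  | succ t ih =>
    intro j
    simp only [phiB]
    have h1 : 0 ≤ ∑ i ∈ G.neighborFinset j, phiB G B t i :=
      Finset.sum_nonneg fun i _ => ih i
    have h2 : (0:ℝ) ≤ 1 / (Fintype.card V : ℝ) := by positivity
    nlinarith [ih j]

/-- Gradient bound by induction on time. -/
lemma grad_pow_bound [Nonempty V] {P : Config V → Config V → ℝ} (hP : IsLocalMC G P)
    (f : Config V → ℝ) (B : Finset V) (hf : SupportedOn f ↑B) :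
    ∀ t j x, |grad ((Matrix.of P ^ t).mulVec f) j x| ≤ 2 * supNorm f * phiB G B t j := by
  intro t
  induction t with
  | zero =>
    intro j x
    rw [pow_zero, Matrix.one_mulVec]
    by_cases hj : j ∈ B
    · simp only [phiB, if_pos hj, mul_one]
      calc |grad f j x| ≤ |f (flip x j)| + |f x| := by
            rw [grad]; exact abs_sub _ _
        _ ≤ 2 * supNorm f := by
            have := abs_le_supNorm f (flip x j)
            have := abs_le_supNorm f x
            linarith
    · simp only [phiB, if_neg hj, mul_zero]
      rw [grad, hf j hj x, sub_self, abs_zero]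
  | succ t ih =>
    intro j x
    have hrw : (Matrix.of P ^ (t+1)).mulVec f
        = (Matrix.of P).mulVec ((Matrix.of P ^ t).mulVec f) := by
      rw [pow_succ', Matrix.mulVec_mulVec]
    rw [hrw]
    calc |grad ((Matrix.of P).mulVec ((Matrix.of P ^ t).mulVec f)) j x|
        ≤ (1 + 1 / (Fintype.card V : ℝ)) * (2 * supNorm f * phiB G B t j)
          + (1 / (Fintype.card V : ℝ)) * ∑ i ∈ G.neighborFinset j, 2 * supNorm f * phiB G B t i :=
          onestep hP _ _ (fun i y => ih i y) j x
      _ = 2 * supNorm f * phiB G B (t+1) j := by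
          simp only [phiB, ← Finset.mul_sum]
          ring

/-- Telescoping over the set of disagreement sites. -/
lemma telescope (F : Config V → ℝ) (bnd : V → ℝ) (hbnd : ∀ j, 0 ≤ bnd j)
    (hg : ∀ j x, |grad F j x| ≤ bnd j) :
    ∀ (D : Finset V) (x x' : Config V), (∀ j, x j ≠ x' j → j ∈ D) →
      |F x - F x'| ≤ ∑ j ∈ D, bnd j := by
  intro D
  induction D using Finset.induction_on with
  | empty =>
    intro x x' h
    have : x = x' := funext fun j => by
      by_contra hj; exact absurd (h j hj) (Finset.notMem_empty j)
    rw [this, sub_self, abs_zero, Finset.sum_empty]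
  | @insert a s ha ih =>
    intro x x' h
    rw [Finset.sum_insert ha]
    by_cases hax : x a = x' a
    · have h2 : ∀ j, x j ≠ x' j → j ∈ s := by
        intro j hj
        rcases Finset.mem_insert.1 (h j hj) with rfl | hs
        · exact absurd hax hj
        · exact hs
      linarith [ih x x' h2, hbnd a]
    · set x'' := flip x' a with hx''
      have hxa : x'' a = x a := by
        rw [hx'', flip_apply_self]
        cases hb : x a <;> cases hb' : x' a <;> simp_all
      have h1 : |F x'' - F x'| ≤ bnd a := hg a x'
      have h2 : |F x - F x''| ≤ ∑ j ∈ s, bnd j := by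
        apply ih
        intro j hj
        have hja : j ≠ a := by
          intro hja; subst hja; exact hj hxa.symm
        have : x'' j = x' j := flip_apply_ne x' hja
        rcases Finset.mem_insert.1 (h j (by rw [← this]; exact hj)) with rfl | hs
        · exact absurd rfl hja
        · exact hs
      calc |F x - F x'| ≤ |F x - F x''| + |F x'' - F x'| := abs_sub_le _ _ _
        _ ≤ bnd a + ∑ j ∈ s, bnd j := by linarith

/-! ### Adjacency matrix estimates -/

lemma adjpow_nonneg : ∀ (m : ℕ) (u v : V), 0 ≤ ((G.adjMatrix ℝ) ^ m) u v := by
  intro m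
  induction m with
  | zero => intro u v; rw [pow_zero]; by_cases h : u = v <;> simp [Matrix.one_apply, h]
  | succ m ih =>
    intro u v
    rw [pow_succ, Matrix.mul_apply]
    apply Finset.sum_nonneg
    intro k _
    refine mul_nonneg (ih u k) ?_
    by_cases h : G.Adj k v <;> simp [h]

lemma adjrow_sum (u : V) : ∑ v : V, (G.adjMatrix ℝ) u v = (G.degree u : ℝ) := by
  have h := SimpleGraph.adjMatrix_mulVec_const_apply (G := G) (α := ℝ) (a := 1) (v := u)
  simpa [Matrix.mulVec, dotProduct] using h

lemma adjpow_rowsum {Δ : ℕ} (hdeg : ∀ v : V, G.degree v ≤ Δ) :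
    ∀ (m : ℕ) (u : V), ∑ v : V, ((G.adjMatrix ℝ) ^ m) u v ≤ (Δ : ℝ) ^ m := by
  intro m
  induction m with
  | zero =>
    intro u
    simp [Matrix.one_apply]
  | succ m ih =>
    intro u
    rw [pow_succ']
    have : ∑ v : V, ((G.adjMatrix ℝ) * ((G.adjMatrix ℝ) ^ m)) u v
        = ∑ k : V, (G.adjMatrix ℝ) u k * ∑ v : V, ((G.adjMatrix ℝ) ^ m) k v := by
      simp only [Matrix.mul_apply, Finset.mul_sum]
      rw [Finset.sum_comm]
    rw [this]
    calc ∑ k : V, (G.adjMatrix ℝ) u k * ∑ v : V, ((G.adjMatrix ℝ) ^ m) k v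
        ≤ ∑ k : V, (G.adjMatrix ℝ) u k * (Δ : ℝ) ^ m := by
          apply Finset.sum_le_sum
          intro k _
          apply mul_le_mul_of_nonneg_left (ih k)
          by_cases h : G.Adj u k <;> simp [h]
      _ = (G.degree u : ℝ) * (Δ : ℝ) ^ m := by rw [← Finset.sum_mul, adjrow_sum]
      _ ≤ (Δ : ℝ) ^ (m + 1) := by
          rw [pow_succ]
          have : (G.degree u : ℝ) ≤ (Δ : ℝ) := by exact_mod_cast hdeg u
          nlinarith [pow_nonneg (by positivity : (0:ℝ) ≤ (Δ:ℝ)) m]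

lemma adjpow_eq_zero {m : ℕ} {u v : V} (h : (m : ℕ∞) < G.edist u v) :
    ((G.adjMatrix ℝ) ^ m) u v = 0 := by
  rw [SimpleGraph.adjMatrix_pow_apply_eq_card_walk]
  norm_cast
  rw [Fintype.card_eq_zero_iff]
  constructor
  intro p
  obtain ⟨p, hp⟩ := p
  have hle := SimpleGraph.edist_le p
  simp only [Set.mem_setOf_eq] at hp
  rw [hp] at hle
  exact absurd hle (not_le.2 h)

end SpeedAux

section SpeedAux2

variable {V : Type*} [Fintype V] [DecidableEq V] (G : SimpleGraph V) [DecidableRel G.Adj]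

/-- Binomial expansion of the comparison matrix power. -/
lemma Mpow (t : ℕ) :
    ((1 + 1/(Fintype.card V:ℝ)) • (1 : Matrix V V ℝ) + (1/(Fintype.card V:ℝ)) • G.adjMatrix ℝ) ^ t
      = ∑ m ∈ Finset.range (t+1),
          ((t.choose m : ℝ) * (1/(Fintype.card V:ℝ))^m * (1 + 1/(Fintype.card V:ℝ))^(t-m))
            • (G.adjMatrix ℝ)^m := by
  set a : ℝ := 1 + 1/(Fintype.card V:ℝ) with ha
  set b : ℝ := 1/(Fintype.card V:ℝ) with hb
  set A := G.adjMatrix ℝ with hA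
  have hc : Commute (b • A) (a • (1 : Matrix V V ℝ)) := by
    unfold Commute SemiconjBy
    rw [Matrix.mul_smul, Matrix.mul_one, Matrix.smul_mul, Matrix.one_mul, smul_comm]
  rw [add_comm, hc.add_pow]
  apply Finset.sum_congr rfl
  intro m hm
  rw [smul_pow, smul_pow, one_pow]
  rw [Matrix.mul_smul, Matrix.mul_one]
  rw [(Nat.cast_commute (t.choose m) ((a ^ (t - m) • b ^ m • A ^ m))).symm.eq]
  rw [← nsmul_eq_mul, ← Nat.cast_smul_eq_nsmul ℝ]
  rw [smul_smul, smul_smul]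
  congr 1
  ring

/-- `phiB` as a matrix power applied to the indicator of `B`. -/
lemma phiB_eq (B : Finset V) (t : ℕ) :
    phiB G B t
      = (((1 + 1/(Fintype.card V:ℝ)) • (1 : Matrix V V ℝ)
          + (1/(Fintype.card V:ℝ)) • G.adjMatrix ℝ) ^ t).mulVec
            (fun i => if i ∈ B then (1:ℝ) else 0) := by
  induction t with
  | zero =>
    rw [pow_zero, Matrix.one_mulVec]
    rfl
  | succ t ih =>
    rw [pow_succ', ← Matrix.mulVec_mulVec, ← ih]
    funext j
    rw [Matrix.add_mulVec, Matrix.smul_mulVec, Matrix.smul_mulVec,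
      Matrix.one_mulVec]
    simp only [Pi.add_apply, Pi.smul_apply, smul_eq_mul, SimpleGraph.adjMatrix_mulVec_apply]
    rfl

/-- Entrywise formula for `phiB`. -/
lemma phiB_formula (B : Finset V) (t : ℕ) (j : V) :
    phiB G B t j = ∑ m ∈ Finset.range (t+1),
      ((t.choose m : ℝ) * (1/(Fintype.card V:ℝ))^m * (1 + 1/(Fintype.card V:ℝ))^(t-m))
        * ∑ i ∈ B, ((G.adjMatrix ℝ)^m) j i := by
  rw [phiB_eq, Mpow]
  simp only [Matrix.mulVec, dotProduct, Matrix.sum_apply, Matrix.smul_apply, smul_eq_mul,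
    Finset.sum_mul, mul_ite, mul_one, mul_zero]
  rw [Finset.sum_ite_mem, Finset.univ_inter, Finset.sum_comm]
  exact Finset.sum_congr rfl fun m _ => (Finset.mul_sum _ _ _).symm

/-- The main estimate on the comparison process outside `Λ`. -/
lemma phiB_sum_bound [Nonempty V] (Δ : ℕ) (hdeg : ∀ v : V, G.degree v ≤ Δ) (B Λ : Finset V)
    (r : ℕ) (hr : ∀ i ∈ B, ∀ j ∉ Λ, (r : ℕ∞) ≤ G.edist i j) (t : ℕ) :
    ∑ j ∈ Finset.univ.filter (fun j => j ∉ Λ), phiB G B t j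
      ≤ (B.card : ℝ) *
          Real.exp ((1 + Real.exp 1 * Δ) * t / (Fintype.card V : ℝ) - r) := by
  set n : ℝ := (Fintype.card V : ℝ) with hn
  have hn1 : (1 : ℝ) ≤ n := by
    have hcard : 1 ≤ Fintype.card V := Fintype.card_pos
    rw [hn]; exact_mod_cast hcard
  have hn0 : (0:ℝ) < n := lt_of_lt_of_le one_pos hn1
  set z : ℝ := (Δ : ℝ) * t / n with hz
  have hz0 : 0 ≤ z := by positivity
  -- inner sums
  have hinner : ∀ m : ℕ, ∑ j ∈ Finset.univ.filter (fun j => j ∉ Λ), ∑ i ∈ B, ((G.adjMatrix ℝ)^m) j i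
      ≤ if m < r then 0 else (B.card : ℝ) * (Δ:ℝ)^m := by
    intro m
    by_cases hm : m < r
    · rw [if_pos hm]
      apply le_of_eq
      apply Finset.sum_eq_zero
      intro j hj
      apply Finset.sum_eq_zero
      intro i hi
      have hj' : j ∉ Λ := (Finset.mem_filter.1 hj).2
      have h1 := hr i hi j hj'
      rw [SimpleGraph.edist_comm] at h1
      exact adjpow_eq_zero (G := G) (lt_of_lt_of_le (by exact_mod_cast hm) h1)
    · rw [if_neg hm]
      have hsym : ∀ j i : V, ((G.adjMatrix ℝ)^m) j i = ((G.adjMatrix ℝ)^m) i j := by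
        intro j i
        have h1 : Matrix.transpose ((G.adjMatrix ℝ)^m) = (G.adjMatrix ℝ)^m := by
          rw [Matrix.transpose_pow, SimpleGraph.transpose_adjMatrix]
        calc ((G.adjMatrix ℝ)^m) j i
            = Matrix.transpose ((G.adjMatrix ℝ)^m) i j := rfl
          _ = ((G.adjMatrix ℝ)^m) i j := by rw [h1]
      calc ∑ j ∈ Finset.univ.filter (fun j => j ∉ Λ), ∑ i ∈ B, ((G.adjMatrix ℝ)^m) j i
          ≤ ∑ j : V, ∑ i ∈ B, ((G.adjMatrix ℝ)^m) j i := by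
            apply Finset.sum_le_sum_of_subset_of_nonneg (Finset.subset_univ _)
            intro j _ _
            exact Finset.sum_nonneg fun i _ => adjpow_nonneg G m j i
        _ = ∑ i ∈ B, ∑ j : V, ((G.adjMatrix ℝ)^m) i j := by
            refine Finset.sum_comm.trans ?_
            apply Finset.sum_congr rfl
            intro i _
            exact Finset.sum_congr rfl fun j _ => hsym j i
        _ ≤ ∑ i ∈ B, (Δ:ℝ)^m := Finset.sum_le_sum fun i _ => adjpow_rowsum G hdeg m i
        _ = (B.card : ℝ) * (Δ:ℝ)^m := by rw [Finset.sum_const, nsmul_eq_mul]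
  -- termwise bound
  have hcoef : ∀ m : ℕ, 0 ≤ (t.choose m : ℝ) * (1/n)^m * (1 + 1/n)^(t-m) := by
    intro m; positivity
  have hterm : ∀ m ∈ Finset.range (t+1),
      (t.choose m : ℝ) * (1/n)^m * (1 + 1/n)^(t-m)
          * (if m < r then 0 else (B.card : ℝ) * (Δ:ℝ)^m)
        ≤ (B.card : ℝ) * (1 + 1/n)^t * Real.exp (-(r:ℝ)) * (Real.exp 1 * z)^m / m.factorial := by
    intro m hm
    have hrhs0 : (0:ℝ) ≤ (B.card : ℝ) * (1 + 1/n)^t * Real.exp (-(r:ℝ)) * (Real.exp 1 * z)^m / m.factorial := by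
      positivity
    by_cases hmr : m < r
    · rw [if_pos hmr, mul_zero]; exact hrhs0
    · rw [if_neg hmr]
      push_neg at hmr
      have h1 : (t.choose m : ℝ) ≤ (t:ℝ)^m / m.factorial := Nat.choose_le_pow_div m t
      have h2 : ((1:ℝ) + 1/n)^(t-m) ≤ (1 + 1/n)^t :=
        pow_le_pow_right₀ (le_add_of_nonneg_right (by positivity)) (Nat.sub_le t m)
      have h3 : (t.choose m : ℝ) * (1/n)^m * (1 + 1/n)^(t-m) * ((B.card : ℝ) * (Δ:ℝ)^m)
          ≤ ((t:ℝ)^m / m.factorial) * (1/n)^m * (1 + 1/n)^t * ((B.card : ℝ) * (Δ:ℝ)^m) := by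
        have hbase : (0:ℝ) ≤ (1/n)^m := by positivity
        have hBp : (0:ℝ) ≤ (B.card : ℝ) * (Δ:ℝ)^m := by positivity
        apply mul_le_mul_of_nonneg_right _ hBp
        apply mul_le_mul (mul_le_mul_of_nonneg_right h1 hbase) h2 (by positivity) (by positivity)
      apply le_trans h3
      have hf0 : (m.factorial : ℝ) ≠ 0 := Nat.cast_ne_zero.2 (Nat.factorial_ne_zero m)
      have hzpow : (t:ℝ)^m * (1/n)^m * (Δ:ℝ)^m = z^m := by
        rw [hz, ← mul_pow, ← mul_pow]
        congr 1
        field_simp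
      have h4 : z^m ≤ Real.exp (-(r:ℝ)) * (Real.exp 1 * z)^m := by
        rw [mul_pow, Real.exp_one_pow]
        calc z^m = 1 * z^m := (one_mul _).symm
          _ ≤ Real.exp ((m:ℝ) - r) * z^m := by
              apply mul_le_mul_of_nonneg_right _ (pow_nonneg hz0 m)
              apply Real.one_le_exp
              have : (r:ℝ) ≤ (m:ℝ) := by exact_mod_cast hmr
              linarith
          _ = Real.exp (-(r:ℝ)) * (Real.exp m * z^m) := by
              rw [← mul_assoc, ← Real.exp_add]
              congr 2
              ring
      calc (t:ℝ)^m / m.factorial * (1/n)^m * (1 + 1/n)^t * ((B.card : ℝ) * (Δ:ℝ)^m)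
          = (B.card : ℝ) * (1 + 1/n)^t * (z^m / m.factorial) := by
            rw [← hzpow]
            field_simp
        _ ≤ (B.card : ℝ) * (1 + 1/n)^t * (Real.exp (-(r:ℝ)) * (Real.exp 1 * z)^m / m.factorial) := by
            gcongr
        _ = (B.card : ℝ) * (1 + 1/n)^t * Real.exp (-(r:ℝ)) * (Real.exp 1 * z)^m / m.factorial := by
            ring
  -- assemble
  have hpow : ((1:ℝ) + 1/n)^t ≤ Real.exp (t/n) := by
    have h1 : (1:ℝ) + 1/n ≤ Real.exp (1/n) := by
      have := Real.add_one_le_exp (1/n)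
      linarith
    calc ((1:ℝ) + 1/n)^t ≤ (Real.exp (1/n))^t := pow_le_pow_left₀ (by positivity) h1 t
      _ = Real.exp (t * (1/n)) := (Real.exp_nat_mul _ t).symm
      _ = Real.exp (t/n) := by rw [mul_one_div]
  calc ∑ j ∈ Finset.univ.filter (fun j => j ∉ Λ), phiB G B t j
      = ∑ m ∈ Finset.range (t+1),
          (t.choose m : ℝ) * (1/n)^m * (1 + 1/n)^(t-m)
            * ∑ j ∈ Finset.univ.filter (fun j => j ∉ Λ), ∑ i ∈ B, ((G.adjMatrix ℝ)^m) j i := by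
        rw [Finset.sum_congr rfl (fun j _ => phiB_formula G B t j), Finset.sum_comm]
        exact Finset.sum_congr rfl fun m _ => (Finset.mul_sum _ _ _).symm
    _ ≤ ∑ m ∈ Finset.range (t+1),
          (t.choose m : ℝ) * (1/n)^m * (1 + 1/n)^(t-m)
            * (if m < r then 0 else (B.card : ℝ) * (Δ:ℝ)^m) := by
        apply Finset.sum_le_sum
        intro m _
        exact mul_le_mul_of_nonneg_left (hinner m) (hcoef m)
    _ ≤ ∑ m ∈ Finset.range (t+1),
          (B.card : ℝ) * (1 + 1/n)^t * Real.exp (-(r:ℝ)) * (Real.exp 1 * z)^m / m.factorial :=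
        Finset.sum_le_sum hterm
    _ = (B.card : ℝ) * (1 + 1/n)^t * Real.exp (-(r:ℝ))
          * ∑ m ∈ Finset.range (t+1), (Real.exp 1 * z)^m / m.factorial := by
        rw [Finset.mul_sum]
        exact Finset.sum_congr rfl fun m _ => (mul_div_assoc _ _ _)
    _ ≤ (B.card : ℝ) * (1 + 1/n)^t * Real.exp (-(r:ℝ)) * Real.exp (Real.exp 1 * z) := by
        apply mul_le_mul_of_nonneg_left (Real.sum_le_exp_of_nonneg (by positivity) (t+1))
        positivity
    _ ≤ (B.card : ℝ) * Real.exp (t/n) * Real.exp (-(r:ℝ)) * Real.exp (Real.exp 1 * z) := by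
        gcongr
    _ = (B.card : ℝ) * Real.exp ((1 + Real.exp 1 * Δ) * t / n - r) := by
        rw [mul_assoc, mul_assoc, ← Real.exp_add, ← Real.exp_add]
        congr 2
        rw [hz]
        field_simp
        ring

end SpeedAux2


/-- **speed of propagation of information.** If `G` has `n` vertices and
maximum degree `Δ > 1`, `P` is a local Markov chain, `f` is supported on `B ⊆ Λ`,
`r = dist(B, Λᶜ)` and `x, x'` agree on `Λ`, then
`|P^t f(x) - P^t f(x')| ≤ ‖f‖_∞ · 8|B| · e^{v t / n - r}` with `v = e²(Δ-1)`. -/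
theorem speed_of_propagation [Nonempty V] (G : SimpleGraph V) [DecidableRel G.Adj]
    (Δ : ℕ) (hΔ : 1 < Δ) (hdeg : ∀ v : V, G.degree v ≤ Δ)
    (P : Config V → Config V → ℝ) (hP : IsLocalMC G P)
    (f : Config V → ℝ) (B : Finset V) (hf : SupportedOn f ↑B)
    (Λ : Finset V) (hBΛ : B ⊆ Λ)
    (r : ℕ) (hr : ∀ i ∈ B, ∀ j ∉ Λ, (r : ℕ∞) ≤ G.edist i j)
    (x x' : Config V) (hagree : ∀ i ∈ Λ, x i = x' i) (t : ℕ) :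
    |(Matrix.of P ^ t).mulVec f x - (Matrix.of P ^ t).mulVec f x'| ≤
      supNorm f * (8 * (B.card : ℝ)) *
        Real.exp (Real.exp 1 ^ 2 * ((Δ : ℝ) - 1) * t / (Fintype.card V : ℝ) - r) := by
  classical
  set n : ℝ := (Fintype.card V : ℝ) with hn
  have hn1 : (1:ℝ) ≤ n := by
    have h : 1 ≤ Fintype.card V := Fintype.card_pos
    rw [hn]; exact_mod_cast h
  have hn0 : (0:ℝ) < n := lt_of_lt_of_le one_pos hn1
  have hs := supNorm_nonneg' f
  have hbnd : ∀ j, 0 ≤ 2 * supNorm f * phiB G B t j := fun j =>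
    mul_nonneg (by linarith) (phiB_nonneg G B t j)
  have hgr := grad_pow_bound G hP f B hf t
  have hD : ∀ j, x j ≠ x' j → j ∈ Finset.univ.filter (fun j => j ∉ Λ) := by
    intro j hj
    rw [Finset.mem_filter]
    exact ⟨Finset.mem_univ _, fun hjΛ => hj (hagree j hjΛ)⟩
  have htel := telescope ((Matrix.of P ^ t).mulVec f) (fun j => 2 * supNorm f * phiB G B t j)
    hbnd hgr (Finset.univ.filter (fun j => j ∉ Λ)) x x' hD
  have hsum := phiB_sum_bound G Δ hdeg B Λ r hr t
  have hΔ2 : (2:ℝ) ≤ (Δ:ℝ) := by exact_mod_cast hΔ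
  have he : (2.7182818283:ℝ) < Real.exp 1 := Real.exp_one_gt_d9
  have hmono : (1 + Real.exp 1 * Δ) * t / n - r ≤ Real.exp 1 ^ 2 * ((Δ:ℝ) - 1) * t / n - r := by
    have hcoe : (1 + Real.exp 1 * Δ) ≤ Real.exp 1 ^ 2 * ((Δ:ℝ) - 1) := by
      have h9 : 0 ≤ (Real.exp 1 ^ 2 - Real.exp 1) * ((Δ:ℝ) - 2) :=
        mul_nonneg (by nlinarith) (by linarith)
      nlinarith
    have ht0 : (0:ℝ) ≤ (t:ℝ) / n := by positivity
    rw [mul_div_assoc, mul_div_assoc]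
    have := mul_le_mul_of_nonneg_right hcoe ht0
    linarith
  have hE : Real.exp ((1 + Real.exp 1 * Δ) * t / n - r)
      ≤ Real.exp (Real.exp 1 ^ 2 * ((Δ:ℝ) - 1) * t / n - r) := Real.exp_le_exp.mpr hmono
  have hB0 : (0:ℝ) ≤ (B.card:ℝ) := Nat.cast_nonneg _
  calc |(Matrix.of P ^ t).mulVec f x - (Matrix.of P ^ t).mulVec f x'|
      ≤ ∑ j ∈ Finset.univ.filter (fun j => j ∉ Λ), 2 * supNorm f * phiB G B t j := htel
    _ = 2 * supNorm f * ∑ j ∈ Finset.univ.filter (fun j => j ∉ Λ), phiB G B t j := by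
        rw [Finset.mul_sum]
    _ ≤ 2 * supNorm f * ((B.card:ℝ) * Real.exp ((1 + Real.exp 1 * Δ) * t / n - r)) :=
        mul_le_mul_of_nonneg_left hsum (by linarith)
    _ ≤ supNorm f * (8 * (B.card : ℝ)) *
          Real.exp (Real.exp 1 ^ 2 * ((Δ : ℝ) - 1) * t / n - r) := by
        have h1 : 2 * supNorm f * ((B.card:ℝ) * Real.exp ((1 + Real.exp 1 * Δ) * t / n - r))
            ≤ 2 * supNorm f * ((B.card:ℝ) * Real.exp (Real.exp 1 ^ 2 * ((Δ:ℝ) - 1) * t / n - r)) := by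
          apply mul_le_mul_of_nonneg_left _ (by linarith)
          exact mul_le_mul_of_nonneg_left hE hB0
        have hE2 : (0:ℝ) ≤ Real.exp (Real.exp 1 ^ 2 * ((Δ:ℝ) - 1) * t / n - r) :=
          le_of_lt (Real.exp_pos _)
        nlinarith [mul_nonneg hs hB0, mul_nonneg (mul_nonneg hs hB0) hE2]

end GibbsLP
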